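/- Let Δ be a (possibly nonpure) simplicial complex and let Γ ⊇ Δ be a complex with dim(Γ) = dim(Δ), d_Δ(σ) = d_Γ(σ) for all σ ∈ Δ, such that Γ and (Γ,Δ) admit h-compatible partitionings. Then for all i,j, h_{i,j}(Δ) equals the number of (i,j)-intervals in an h-compatible partitioning of Γ minus the number of (i,j)-intervals in an h-compatible partitioning of (Γ,Δ). -/
import Mathlib


/-- A simplicial complex on vertex set `ℕ`: a finite collection of finite sets of
vertices (faces) closed under taking subsets. -/
def IsComplex (Δ : Finset (Finset ℕ)) : Prop :=
  ∀ σ ∈ Δ, ∀ τ ⊆ σ, τ ∈ Δ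

/-- `F` is a facet (maximal face) of `Δ`. -/
def IsFacet (Δ : Finset (Finset ℕ)) (F : Finset ℕ) : Prop :=
  F ∈ Δ ∧ ∀ G ∈ Δ, F ⊆ G → F = G

/-- `Δ` is a pure `d`-dimensional complex: it is nonempty and every facet has
cardinality `d + 1` (i.e. dimension `d`). -/
def PureDim (Δ : Finset (Finset ℕ)) (d : ℤ) : Prop :=
  Δ.Nonempty ∧ ∀ F : Finset ℕ, IsFacet Δ F → (F.card : ℤ) = d + 1

/-- `S` is a partitioning of the set of faces `P` (ordered by inclusion) into Boolean
intervals topped by maximal elements of `P`.  Each pair `p ∈ S` represents the interval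
`[p.1, p.2]`; the intervals must be full Boolean intervals contained in `P`
(second condition), their tops must be maximal elements of `P` (first condition),
and every element of `P` must lie in exactly one interval (third condition). -/
def IsPartitioning (S : Finset (Finset ℕ × Finset ℕ)) (P : Finset (Finset ℕ)) : Prop :=
  (∀ p ∈ S, p.1 ⊆ p.2 ∧ p.2 ∈ P ∧ ∀ c ∈ P, p.2 ⊆ c → p.2 = c) ∧
  (∀ p ∈ S, ∀ e : Finset ℕ, p.1 ⊆ e → e ⊆ p.2 → e ∈ P) ∧
  (∀ e ∈ P, ∃! p : Finset ℕ × Finset ℕ, p ∈ S ∧ p.1 ⊆ e ∧ e ⊆ p.2)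

/-- A set of faces, ordered by inclusion, is partitionable if it admits a partitioning
into Boolean intervals whose maximum elements are maximal elements. -/
def Partitionable (P : Finset (Finset ℕ)) : Prop :=
  ∃ S : Finset (Finset ℕ × Finset ℕ), IsPartitioning S P

/-- The relative complex `(Δ, ⟨F⟩)`: the faces of `Δ` not contained in `F`. -/
def relF (Δ : Finset (Finset ℕ)) (F : Finset ℕ) : Finset (Finset ℕ) :=
  Δ.filter (fun τ => ¬ τ ⊆ F)

/-- `dcard amb σ` is `d_amb(σ) + 1`: the largest cardinality of a face of `amb`
containing `σ` (so `d_amb(σ)` is the largest dimension of such a face). -/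
def dcard (amb : Finset (Finset ℕ)) (σ : Finset ℕ) : ℕ :=
  (amb.filter (fun τ => σ ⊆ τ)).sup Finset.card

/-- The `f`-triangle: `ftri amb P i j` is the number of faces `σ` of `P` with
`d(σ) = i - 1` (measured in the ambient complex `amb`) and `dim σ = j - 1`,
i.e. `dcard amb σ = i` and `|σ| = j`. -/
def ftri (amb P : Finset (Finset ℕ)) (i j : ℕ) : ℕ :=
  (P.filter (fun σ => dcard amb σ = i ∧ σ.card = j)).card

/-- The `h`-triangle: `h_{i,j} = ∑_{m=0}^{j} (-1)^{j-m} C(i-m, j-m) f_{i,m}`. -/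
def htri (amb P : Finset (Finset ℕ)) (i j : ℕ) : ℤ :=
  ∑ m ∈ Finset.range (j + 1),
    (-1 : ℤ) ^ (j - m) * (Nat.choose (i - m) (j - m) : ℤ) * (ftri amb P i m : ℤ)

/-- An `h`-compatible partitioning of the (relative) complex with face set `P` inside
the ambient complex `amb`: a partitioning such that for all `i, j` the number of
`(i,j)`-intervals (Boolean intervals whose bottom element has cardinality `j` and whose
top element is a facet of cardinality `i`) equals `h_{i,j}`. -/
def HCompatible (S : Finset (Finset ℕ × Finset ℕ)) (amb P : Finset (Finset ℕ)) : Prop :=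
  IsPartitioning S P ∧
    ∀ i j : ℕ,
      ((S.filter (fun p => p.2.card = i ∧ p.1.card = j)).card : ℤ) = htri amb P i j


lemma ftri_split (Γ Δ : Finset (Finset ℕ)) (hsub : Δ ⊆ Γ)
    (hd : ∀ σ ∈ Δ, dcard Δ σ = dcard Γ σ) (i j : ℕ) :
    ftri Γ Γ i j = ftri Δ Δ i j + ftri Γ (Γ \ Δ) i j := by
  unfold ftri
  have hU : Δ ∪ (Γ \ Δ) = Γ := Finset.union_sdiff_of_subset hsub
  have h1 : Γ.filter (fun σ => dcard Γ σ = i ∧ σ.card = j) =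
      Δ.filter (fun σ => dcard Γ σ = i ∧ σ.card = j) ∪
      (Γ \ Δ).filter (fun σ => dcard Γ σ = i ∧ σ.card = j) := by
    rw [← Finset.filter_union, hU]
  rw [h1, Finset.card_union_of_disjoint
    (Finset.disjoint_filter_filter Finset.disjoint_sdiff)]
  congr 1
  apply congrArg
  apply Finset.filter_congr
  intro σ hσ
  simp [hd σ hσ]

/-- If `Δ ⊆ Γ` are (possibly nonpure) complexes with `dim Γ = dim Δ` and
`d_Δ(σ) = d_Γ(σ)` for all `σ ∈ Δ`, and `Γ` and `(Γ,Δ)` admit `h`-compatible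
partitionings `S` and `T`, then `h_{i,j}(Δ)` equals the number of `(i,j)`-intervals of
`S` minus the number of `(i,j)`-intervals of `T`. -/
theorem h_triangle_from_h_compatible_partitionings (Γ Δ : Finset (Finset ℕ))
    (hΓ : IsComplex Γ) (hΔ : IsComplex Δ) (hsub : Δ ⊆ Γ)
    (hdim : Γ.sup Finset.card = Δ.sup Finset.card)
    (hd : ∀ σ ∈ Δ, dcard Δ σ = dcard Γ σ)
    (S T : Finset (Finset ℕ × Finset ℕ))
    (hS : HCompatible S Γ Γ) (hT : HCompatible T Γ (Γ \ Δ)) :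
    ∀ i j : ℕ,
      htri Δ Δ i j =
        ((S.filter (fun p => p.2.card = i ∧ p.1.card = j)).card : ℤ) -
          ((T.filter (fun p => p.2.card = i ∧ p.1.card = j)).card : ℤ) := by
  intro i j
  rw [hS.2 i j, hT.2 i j]
  unfold htri
  rw [← Finset.sum_sub_distrib]
  apply Finset.sum_congr rfl
  intro m _
  rw [ftri_split Γ Δ hsub hd i m]
  push_cast
  ring
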